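/- Let W_t = ∑_{J∈𝒥} J W_J(A_J(t)), where (W_J) are independent standard Brownian motions, A_J : [0,T] → [0,∞) are nondecreasing with A_J(0) = 0, J ∈ ℤ^ℕ with at most J* nonzero entries each bounded in absolute value, and μ(j) ≤ ν(j)^{β₃}. Suppose ∑_J ν(J)^{−β₂−2ε} < ∞ and ∑_J ν(J)^{β₂+2β₃+4ε} A_J(T) < ∞ for some ε > 0. Then almost surely sup_{0≤t≤T} ∑_j μ(j) ∑_J |J^j| |W_J(A_J(t))| < ∞, i.e. W_t ∈ ℝ_μ for all t ∈ [0,T]. -/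

import Mathlib

open MeasureTheory ProbabilityTheory

/-- A standard one-dimensional Brownian motion: starts at `0`, has a.s. continuous paths,
measurable coordinates, Gaussian increments `B_t - B_s ~ N(0, t - s)` for `0 ≤ s ≤ t`,
and independent increments along any monotone sequence of times. -/
structure IsStdBrownianMotion {Ω : Type*} [MeasurableSpace Ω] (P : Measure Ω)
    (B : ℝ → Ω → ℝ) : Prop where
  meas : ∀ t, Measurable (B t)
  zero : ∀ᵐ ω ∂P, B 0 ω = 0
  cont : ∀ᵐ ω ∂P, Continuous fun t => B t ω
  gauss_incr : ∀ s t : ℝ, 0 ≤ s → s ≤ t →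
    Measure.map (fun ω => B t ω - B s ω) P = gaussianReal 0 (Real.toNNReal (t - s))
  indep_incr : ∀ t : ℕ → ℝ, Monotone t → (∀ n, 0 ≤ t n) →
    iIndepFun
      (fun n ω => B (t (n + 1)) ω - B (t n) ω) P

open scoped ENNReal

section DrivingDiffusionAux

noncomputable def m4 : ℝ≥0∞ := ∫⁻ x, ENNReal.ofReal (x^4) ∂(gaussianReal 0 1)

lemma meas_ofReal_pow4 : Measurable (fun x : ℝ => ENNReal.ofReal (x^4)) :=
  ENNReal.measurable_ofReal.comp (measurable_id.pow_const 4)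

lemma m4_ne_top : m4 ≠ ⊤ := by
  have h1 : gaussianReal 0 1 = MeasureTheory.volume.withDensity (gaussianPDF 0 1) :=
    gaussianReal_of_var_ne_zero 0 one_ne_zero
  have h2 : m4 = ∫⁻ x, ENNReal.ofReal (x^4 * gaussianPDFReal 0 1 x) := by
    rw [m4, h1, lintegral_withDensity_eq_lintegral_mul _ (measurable_gaussianPDF 0 1)
      meas_ofReal_pow4]
    refine lintegral_congr fun x => ?_
    simp only [Pi.mul_apply, gaussianPDF]
    rw [← ENNReal.ofReal_mul (gaussianPDFReal_nonneg 0 1 x), mul_comm]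
  rw [h2]
  refine (Integrable.lintegral_lt_top ?_).ne
  have hb : (0:ℝ) < 1/2 := by norm_num
  have hs : (-1:ℝ) < 4 := by norm_num
  have base := integrable_rpow_mul_exp_neg_mul_sq hb hs
  have : Integrable (fun x : ℝ => (√(2 * Real.pi * 1))⁻¹ * (x ^ (4:ℝ) * Real.exp (-(1/2) * x ^ 2))) := base.const_mul _
  refine this.congr (Filter.Eventually.of_forall fun x => ?_)
  rw [gaussianPDFReal_def]
  simp only [NNReal.coe_one]
  have h4 : x ^ (4:ℝ) = x ^ (4:ℕ) := by
    rw [show (4:ℝ) = ((4:ℕ):ℝ) by norm_num, Real.rpow_natCast]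
  rw [h4]
  have hexp : Real.exp (-(x - 0) ^ 2 / (2 * 1)) = Real.exp (-(1/2) * x ^ 2) := by
    congr 1; ring
  rw [hexp]
  ring

lemma gauss_moment4 {Ω : Type*} [MeasurableSpace Ω] {P : Measure Ω} {X : Ω → ℝ}
    (hX : Measurable X) {v : ℝ} (hv : 0 ≤ v)
    (hmap : Measure.map X P = gaussianReal 0 v.toNNReal) :
    ∫⁻ ω, ENNReal.ofReal ((X ω)^4) ∂P = ENNReal.ofReal (v^2) * m4 := by
  have h1 : ∫⁻ ω, ENNReal.ofReal ((X ω)^4) ∂P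
      = ∫⁻ x, ENNReal.ofReal (x^4) ∂(gaussianReal 0 v.toNNReal) := by
    rw [← hmap, lintegral_map meas_ofReal_pow4 hX]
  have hscale : gaussianReal 0 v.toNNReal
      = Measure.map (fun x => Real.sqrt v * x) (gaussianReal 0 1) := by
    have hnn : (⟨(Real.sqrt v)^2, sq_nonneg _⟩ : NNReal) * 1 = v.toNNReal := by
      apply NNReal.coe_injective
      simp only [NNReal.coe_mul, NNReal.coe_mk, NNReal.coe_one, mul_one,
        Real.sq_sqrt hv, Real.coe_toNNReal _ hv]
      rfl
    have h := gaussianReal_map_const_mul (μ := 0) (v := 1) (Real.sqrt v)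
    rw [mul_zero] at h
    rw [h]
    congr 1
    ext
    simp [Real.sq_sqrt hv, Real.coe_toNNReal _ hv]
  rw [h1, hscale, lintegral_map meas_ofReal_pow4 (by fun_prop : Measurable fun x : ℝ => Real.sqrt v * x)]
  have : ∀ x : ℝ, ENNReal.ofReal ((Real.sqrt v * x)^4)
      = ENNReal.ofReal (v^2) * ENNReal.ofReal (x^4) := by
    intro x
    rw [mul_pow, ← ENNReal.ofReal_mul (by positivity)]
    congr 1
    rw [show (Real.sqrt v)^4 = ((Real.sqrt v)^2)^2 by ring, Real.sq_sqrt hv]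
  simp_rw [this]
  rw [lintegral_const_mul _ meas_ofReal_pow4, m4]

lemma ofReal_pow4_rpow (x : ℝ) : (ENNReal.ofReal (x^4)) ^ (4⁻¹:ℝ) = ENNReal.ofReal |x| := by
  rw [ENNReal.ofReal_rpow_of_nonneg (by positivity) (by norm_num)]
  congr 1
  rw [show x^4 = |x|^4 by rw [← abs_pow]; exact (abs_of_nonneg (by positivity)).symm,
    ← Real.rpow_natCast |x| 4, ← Real.rpow_mul (abs_nonneg x)]
  norm_num

open Filter in
lemma chain_bound (f : ℝ → ℝ) (hf : Continuous f) (hf0 : f 0 = 0) {a : ℝ} (ha : 0 ≤ a)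
    {s : ℝ} (hs : s ∈ Set.Icc 0 a) :
    ENNReal.ofReal |f s| ≤
      ∑' m : ℕ, (∑ k ∈ Finset.range (2^m),
        ENNReal.ofReal ((f (a*((k:ℝ)+1)/2^m) - f (a*(k:ℝ)/2^m))^4)) ^ (4⁻¹:ℝ) := by
  set D : ℕ → ℝ≥0∞ := fun m => (∑ k ∈ Finset.range (2^m),
    ENNReal.ofReal ((f (a*((k:ℝ)+1)/2^m) - f (a*(k:ℝ)/2^m))^4)) ^ (4⁻¹:ℝ) with hDdef
  set B : ℝ≥0∞ := ∑' m, D m with hBdef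
  -- single increments are bounded by D m
  have habs4 : ∀ x : ℝ, (ENNReal.ofReal (x^4)) ^ (4⁻¹:ℝ) = ENNReal.ofReal |x| := by
    intro x
    rw [ENNReal.ofReal_rpow_of_nonneg (by positivity) (by norm_num)]
    congr 1
    rw [show x^4 = |x|^4 by rw [← abs_pow]; exact (abs_of_nonneg (by positivity)).symm,
      ← Real.rpow_natCast |x| 4, ← Real.rpow_mul (abs_nonneg x)]
    norm_num
  have hDk : ∀ m : ℕ, ∀ k : ℕ, k < 2^m →
      ENNReal.ofReal |f (a*((k:ℝ)+1)/2^m) - f (a*(k:ℝ)/2^m)| ≤ D m := by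
    intro m k hk
    rw [← habs4]
    exact ENNReal.rpow_le_rpow (Finset.single_le_sum
      (f := fun k : ℕ => ENNReal.ofReal ((f (a*((k:ℝ)+1)/2^m) - f (a*(k:ℝ)/2^m))^4))
      (fun i _ => zero_le) (Finset.mem_range.2 hk)) (by norm_num)
  -- dyadic points bound
  have hdy : ∀ m : ℕ, ∀ j : ℕ, j ≤ 2^m →
      ENNReal.ofReal |f (a*(j:ℝ)/2^m)| ≤ ∑ i ∈ Finset.range (m+1), D i := by
    intro m
    induction m with
    | zero =>
      intro j hj
      interval_cases j
      · simp [hf0]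
      · have h := hDk 0 0 (by norm_num)
        rw [Finset.sum_range_one]
        have e0 : a*((0:ℕ):ℝ)/2^0 = 0 := by norm_num
        have e1 : a*(((0:ℕ):ℝ)+1)/2^0 = a*((1:ℕ):ℝ)/2^0 := by norm_num
        rwa [e0, hf0, sub_zero, e1] at h
    | succ m ih =>
      intro j hj
      rcases Nat.even_or_odd j with ⟨q, hq⟩ | ⟨q, hq⟩
      · -- even case : j = q + q
        have hq' : q ≤ 2^m := by
          have := pow_succ 2 m
          omega
        have hpt : a*(j:ℝ)/2^(m+1) = a*(q:ℝ)/2^m := by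
          subst hq
          have h2 : (2:ℝ)^(m+1) = 2 * 2^m := by ring
          rw [h2]
          push_cast
          have h2m : (2:ℝ)^m ≠ 0 := by positivity
          field_simp
          ring
        rw [hpt]
        exact (ih q hq').trans (Finset.sum_le_sum_of_subset
          (Finset.range_subset_range.2 (by omega)))
      · -- odd case : j = 2*q + 1
        have h2q : 2*q < 2^(m+1) := by omega
        have hq' : q ≤ 2^m := by
          have := pow_succ 2 m
          omega
        have hpt : a*((2*q:ℕ):ℝ)/2^(m+1) = a*(q:ℝ)/2^m := by
          have h2 : (2:ℝ)^(m+1) = 2 * 2^m := by ring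
          rw [h2]
          push_cast
          have h2m : (2:ℝ)^m ≠ 0 := by positivity
          field_simp
        have hj1 : a*(((2*q:ℕ):ℝ)+1)/2^(m+1) = a*(j:ℝ)/2^(m+1) := by
          subst hq; push_cast; ring_nf
        have hincr := hDk (m+1) (2*q) h2q
        rw [hj1, hpt] at hincr
        have htri : |f (a*(j:ℝ)/2^(m+1))| ≤
            |f (a*(q:ℝ)/2^m)| + |f (a*(j:ℝ)/2^(m+1)) - f (a*(q:ℝ)/2^m)| := by
          calc |f (a*(j:ℝ)/2^(m+1))|
              = |f (a*(q:ℝ)/2^m) + (f (a*(j:ℝ)/2^(m+1)) - f (a*(q:ℝ)/2^m))| := by ring_nf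
            _ ≤ _ := abs_add_le _ _
        calc ENNReal.ofReal |f (a*(j:ℝ)/2^(m+1))|
            ≤ ENNReal.ofReal (|f (a*(q:ℝ)/2^m)| +
              |f (a*(j:ℝ)/2^(m+1)) - f (a*(q:ℝ)/2^m)|) := ENNReal.ofReal_le_ofReal htri
          _ ≤ ENNReal.ofReal |f (a*(q:ℝ)/2^m)| +
              ENNReal.ofReal |f (a*(j:ℝ)/2^(m+1)) - f (a*(q:ℝ)/2^m)| :=
              ENNReal.ofReal_add_le
          _ ≤ (∑ i ∈ Finset.range (m+1), D i) + D (m+1) :=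
              add_le_add (ih q hq') hincr
          _ = ∑ i ∈ Finset.range (m+2), D i := (Finset.sum_range_succ _ _).symm
  obtain ⟨hs0, hsa⟩ := hs
  rcases eq_or_lt_of_le ha with ha0 | hap
  · have : s = 0 := le_antisymm (by rw [← ha0] at hsa; exact hsa) hs0
    simp [this, hf0]
  · by_cases hB : B = ⊤
    · exact hB ▸ le_top
    have hfin : ∀ n, (∑ i ∈ Finset.range (n+1), D i) ≤ B := fun n => ENNReal.sum_le_tsum _
    set jm : ℕ → ℕ := fun m => ⌊s * 2^m / a⌋₊ with hjm
    have hjle : ∀ m, jm m ≤ 2^m := by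
      intro m
      have h1 : s * 2^m / a ≤ ((2^m : ℕ):ℝ) := by
        rw [div_le_iff₀ hap]
        push_cast
        calc s * 2^m ≤ a * 2^m := by nlinarith [pow_pos (show (0:ℝ) < 2 by norm_num) m]
          _ = 2^m * a := by ring
      calc jm m ≤ ⌊((2^m : ℕ):ℝ)⌋₊ := Nat.floor_mono h1
        _ = 2^m := Nat.floor_natCast _
    set pts : ℕ → ℝ := fun m => a * (jm m : ℝ)/2^m with hpts
    have hptB : ∀ m, |f (pts m)| ≤ B.toReal := by
      intro m
      have := (hdy m (jm m) (hjle m)).trans (hfin m)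
      exact (ENNReal.ofReal_le_iff_le_toReal hB).1 this
    have hup : ∀ m, pts m ≤ s := by
      intro m
      have hfl : (jm m : ℝ) ≤ s * 2^m / a := Nat.floor_le (by positivity)
      have h2m : (0:ℝ) < 2^m := by positivity
      have h1 : a * (jm m : ℝ)/2^m ≤ a * (s * 2^m / a)/2^m := by gcongr
      have h2 : a * (s * 2^m / a)/2^m = s := by field_simp
      rw [hpts]
      simp only []
      rw [← h2]; exact h1
    have hlo : ∀ m, s - a/2^m ≤ pts m := by
      intro m
      have h2m : (0:ℝ) < 2^m := by positivity
      have hfl : s * 2^m / a < (jm m : ℝ) + 1 := Nat.lt_floor_add_one _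
      have h1 : s * 2^m < ((jm m : ℝ) + 1) * a := by
        rw [div_lt_iff₀ hap] at hfl; nlinarith
      have h2 : s < ((jm m : ℝ) + 1) * a / 2^m := by
        rw [lt_div_iff₀ h2m]; linarith
      have h3 : ((jm m : ℝ) + 1) * a / 2^m = pts m + a/2^m := by rw [hpts]; ring
      rw [h3] at h2
      linarith
    have hd0 : Tendsto (fun m : ℕ => a/2^m) atTop (nhds 0) := by
      have he : (fun m : ℕ => a/2^m) = fun m => a * (2⁻¹:ℝ)^m := by
        funext m; rw [inv_pow]; ring
      rw [he]
      have := tendsto_pow_atTop_nhds_zero_of_lt_one (show (0:ℝ) ≤ 2⁻¹ by norm_num)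
        (show (2⁻¹:ℝ) < 1 by norm_num)
      simpa using this.const_mul a
    have hlow' : Tendsto (fun m : ℕ => s - a/2^m) atTop (nhds s) := by
      simpa using tendsto_const_nhds.sub hd0
    have hptst : Tendsto pts atTop (nhds s) :=
      tendsto_of_tendsto_of_tendsto_of_le_of_le hlow' tendsto_const_nhds hlo hup
    have hfs : Tendsto (fun m => |f (pts m)|) atTop (nhds |f s|) :=
      (continuous_abs.tendsto _).comp ((hf.tendsto s).comp hptst)
    have hfsB : |f s| ≤ B.toReal := le_of_tendsto' hfs hptB
    exact (ENNReal.ofReal_le_iff_le_toReal hB).2 hfsB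

lemma Dm_bound {Ω : Type*} [MeasurableSpace Ω] (P : Measure Ω) [IsProbabilityMeasure P]
    (B : ℝ → Ω → ℝ) (hmeas : ∀ t, Measurable (B t))
    (hg : ∀ s t : ℝ, 0 ≤ s → s ≤ t →
      Measure.map (fun ω => B t ω - B s ω) P = gaussianReal 0 (Real.toNNReal (t - s)))
    {a : ℝ} (ha : 0 ≤ a) (m : ℕ) :
    ∫⁻ ω, (∑ k ∈ Finset.range (2^m),
      ENNReal.ofReal ((B (a*((k:ℝ)+1)/2^m) ω - B (a*(k:ℝ)/2^m) ω)^4)) ^ (4⁻¹:ℝ) ∂P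
    ≤ m4 ^ (4⁻¹:ℝ) * ENNReal.ofReal (a ^ (2⁻¹:ℝ) * ((2:ℝ) ^ (-(4⁻¹:ℝ)))^m) := by
  set g : Ω → ℝ≥0∞ := fun ω => ∑ k ∈ Finset.range (2^m),
    ENNReal.ofReal ((B (a*((k:ℝ)+1)/2^m) ω - B (a*(k:ℝ)/2^m) ω)^4) with hgdef
  have hgmeas : Measurable g := by
    apply Finset.measurable_sum
    intro k _
    exact (((hmeas _).sub (hmeas _)).pow_const 4).ennreal_ofReal
  have hconj : Real.HolderConjugate 4 (4/3) :=
    (Real.holderConjugate_iff_eq_conjExponent (by norm_num)).2 (by norm_num)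
  have h1 : ∫⁻ ω, g ω ^ (4⁻¹:ℝ) ∂P ≤ (∫⁻ ω, g ω ∂P) ^ ((4:ℝ)⁻¹) := by
    have h2 := ENNReal.lintegral_mul_le_Lp_mul_Lq P hconj
      (f := fun ω => g ω ^ (4⁻¹:ℝ)) (g := fun _ => 1)
      ((ENNReal.continuous_rpow_const.measurable.comp hgmeas).aemeasurable)
      aemeasurable_const
    simp only [Pi.mul_apply, mul_one, ENNReal.one_rpow, lintegral_one, measure_univ,
      ENNReal.one_rpow] at h2
    have h3 : ∀ ω, (g ω ^ (4⁻¹:ℝ)) ^ (4:ℝ) = g ω := by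
      intro ω
      rw [← ENNReal.rpow_mul]
      norm_num
    simp_rw [h3] at h2
    simpa [one_div] using h2
  have hterm : ∀ k : ℕ, ∫⁻ ω,
      ENNReal.ofReal ((B (a*((k:ℝ)+1)/2^m) ω - B (a*(k:ℝ)/2^m) ω)^4) ∂P
      = ENNReal.ofReal ((a/2^m)^2) * m4 := by
    intro k
    have hs0 : (0:ℝ) ≤ a*(k:ℝ)/2^m := by positivity
    have hst : a*(k:ℝ)/2^m ≤ a*((k:ℝ)+1)/2^m := by gcongr; linarith
    have htv : a*((k:ℝ)+1)/2^m - a*(k:ℝ)/2^m = a/2^m := by ring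
    have hmap := hg _ _ hs0 hst
    rw [htv] at hmap
    exact gauss_moment4 ((hmeas _).sub (hmeas _)) (by positivity) hmap
  have hgint : ∫⁻ ω, g ω ∂P = ((2^m : ℕ) : ℝ≥0∞) * (ENNReal.ofReal ((a/2^m)^2) * m4) := by
    rw [hgdef]
    rw [lintegral_finset_sum _ (f := fun (k : ℕ) ω =>
        ENNReal.ofReal ((B (a*((k:ℝ)+1)/2^m) ω - B (a*(k:ℝ)/2^m) ω)^4)) (fun k _ =>
      (((hmeas _).sub (hmeas _)).pow_const 4).ennreal_ofReal)]
    rw [Finset.sum_congr rfl (fun k _ => hterm k), Finset.sum_const, Finset.card_range,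
      nsmul_eq_mul]
  rw [hgint] at h1
  refine h1.trans ?_
  -- now pure algebra
  have hcast : ((2^m : ℕ) : ℝ≥0∞) = ENNReal.ofReal ((2:ℝ)^m) := by
    rw [← ENNReal.ofReal_natCast]
    congr 1
    push_cast
    ring
  rw [hcast, ← mul_assoc, ← ENNReal.ofReal_mul (by positivity)]
  rw [ENNReal.mul_rpow_of_nonneg _ _ (by norm_num : (0:ℝ) ≤ (4:ℝ)⁻¹)]
  rw [mul_comm]
  apply mul_le_mul_right
  -- (ofReal (2^m * (a/2^m)^2)) ^ (4⁻¹) ≤ ofReal (a^(2⁻¹) * q^m)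
  have hkey : (2:ℝ)^m * (a/2^m)^2 = (a ^ (2⁻¹:ℝ) * ((2:ℝ) ^ (-(4⁻¹:ℝ)))^m)^4 := by
    have hq4 : (((2:ℝ) ^ (-(4⁻¹:ℝ)))^m)^4 = (2⁻¹:ℝ)^m := by
      rw [pow_right_comm]
      congr 1
      rw [← Real.rpow_natCast ((2:ℝ)^(-(4⁻¹:ℝ))) 4, ← Real.rpow_mul (by norm_num : (0:ℝ) ≤ 2)]
      norm_num
    have ha4 : (a^(2⁻¹:ℝ))^4 = a^2 := by
      rw [← Real.rpow_natCast (a^(2⁻¹:ℝ)) 4, ← Real.rpow_mul ha]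
      norm_num
    rw [mul_pow, ha4, hq4, inv_pow]
    have h2m : (2:ℝ)^m ≠ 0 := by positivity
    field_simp
  rw [hkey, ofReal_pow4_rpow, abs_of_nonneg (by positivity)]

lemma G_bound {Ω : Type*} [MeasurableSpace Ω] (P : Measure Ω) [IsProbabilityMeasure P] (B : ℝ → Ω → ℝ) (hmeas : ∀ t, Measurable (B t))
    (hg : ∀ s t : ℝ, 0 ≤ s → s ≤ t →
      Measure.map (fun ω => B t ω - B s ω) P = gaussianReal 0 (Real.toNNReal (t - s)))
    {a : ℝ} (ha : 0 ≤ a) :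
    ∫⁻ ω, ∑' m : ℕ, (∑ k ∈ Finset.range (2^m),
      ENNReal.ofReal ((B (a*((k:ℝ)+1)/2^m) ω - B (a*(k:ℝ)/2^m) ω)^4)) ^ (4⁻¹:ℝ) ∂P
    ≤ m4 ^ (4⁻¹:ℝ) * ENNReal.ofReal (a ^ (2⁻¹:ℝ) * (1 - (2:ℝ) ^ (-(4⁻¹:ℝ)))⁻¹) := by
  set q : ℝ := (2:ℝ) ^ (-(4⁻¹:ℝ)) with hqdef
  have hq0 : 0 ≤ q := by positivity
  have hq1 : q < 1 := by
    rw [hqdef]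
    apply Real.rpow_lt_one_of_one_lt_of_neg (by norm_num) (by norm_num)
  have hmeasD : ∀ m : ℕ, Measurable (fun ω => (∑ k ∈ Finset.range (2^m),
      ENNReal.ofReal ((B (a*((k:ℝ)+1)/2^m) ω - B (a*(k:ℝ)/2^m) ω)^4)) ^ (4⁻¹:ℝ)) := by
    intro m
    apply (ENNReal.continuous_rpow_const.measurable).comp
    exact Finset.measurable_sum _ (fun k _ =>
      (((hmeas _).sub (hmeas _)).pow_const 4).ennreal_ofReal)
  rw [lintegral_tsum (fun m => (hmeasD m).aemeasurable)]
  calc ∑' m : ℕ, ∫⁻ ω, (∑ k ∈ Finset.range (2^m),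
        ENNReal.ofReal ((B (a*((k:ℝ)+1)/2^m) ω - B (a*(k:ℝ)/2^m) ω)^4)) ^ (4⁻¹:ℝ) ∂P
      ≤ ∑' m : ℕ, m4 ^ (4⁻¹:ℝ) * ENNReal.ofReal (a ^ (2⁻¹:ℝ) * q^m) :=
        ENNReal.tsum_le_tsum (fun m => Dm_bound P B hmeas hg ha m)
    _ = m4 ^ (4⁻¹:ℝ) * ∑' m : ℕ, ENNReal.ofReal (a ^ (2⁻¹:ℝ) * q^m) := ENNReal.tsum_mul_left
    _ = m4 ^ (4⁻¹:ℝ) * ENNReal.ofReal (a ^ (2⁻¹:ℝ) * (1 - q)⁻¹) := by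
        congr 1
        rw [← ENNReal.ofReal_tsum_of_nonneg (fun m => by positivity)
          ((summable_geometric_of_lt_one hq0 hq1).mul_left _)]
        congr 1
        rw [tsum_mul_left, tsum_geometric_of_lt_one hq0 hq1]

end DrivingDiffusionAux

theorem driving_diffusion_in_weighted_l1
    {Ω : Type*} [MeasurableSpace Ω] (P : Measure Ω) [IsProbabilityMeasure P]
    {ι : Type*} [Countable ι]
    -- independent standard Brownian motions (W_J)
    (W : ι → ℝ → Ω → ℝ) (hW : ∀ J, IsStdBrownianMotion P (W J))
    (hindep : iIndepFun
      (fun J ω t => W J t ω) P)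
    -- time changes A_J
    (T : ℝ) (hT : 0 < T)
    (A : ι → ℝ → ℝ) (hA0 : ∀ J, A J 0 = 0) (hApos : ∀ J t, 0 ≤ A J t)
    (hAmono : ∀ J, MonotoneOn (A J) (Set.Icc (0:ℝ) T))
    -- jump vectors with at most Jstar nonzero entries, each bounded by Jstar
    (Jv : ι → ℕ → ℤ) (Jstar : ℕ)
    (hJsupp : ∀ J, (Function.support (Jv J)).Finite ∧
      ∀ (h : (Function.support (Jv J)).Finite), h.toFinset.card ≤ Jstar)
    (hJbnd : ∀ J j, |Jv J j| ≤ (Jstar : ℤ))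
    -- weights
    (ν : ℕ → ℝ) (hν : ∀ j, 1 ≤ ν j)
    (νJ : ι → ℝ) (hνJ1 : ∀ J, 1 ≤ νJ J)
    (hνJ : ∀ J j, Jv J j ≠ 0 → ν j ≤ νJ J)
    (μ : ℕ → ℝ) (hμpos : ∀ j, 0 ≤ μ j)
    (β₂ β₃ ε : ℝ) (hβ₃ : 0 ≤ β₃) (hε : 0 < ε)
    (hμν : ∀ j, μ j ≤ ν j ^ β₃)
    (hsum1 : Summable (fun J : ι => νJ J ^ (-β₂ - 2 * ε)))
    (hsum2 : Summable (fun J : ι => νJ J ^ (β₂ + 2 * β₃ + 4 * ε) * A J T)) :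
    ∀ᵐ ω ∂P,
      (⨆ t ∈ Set.Icc (0:ℝ) T, ∑' j : ℕ, ENNReal.ofReal (μ j) *
        ∑' J : ι, ENNReal.ofReal (|(Jv J j : ℝ)| * |W J (A J t) ω|)) < ⊤ := by
  classical
  -- the dominating process
  set G : ι → Ω → ℝ≥0∞ := fun J ω => ∑' m : ℕ, (∑ k ∈ Finset.range (2^m),
    ENNReal.ofReal ((W J (A J T*((k:ℝ)+1)/2^m) ω - W J (A J T*(k:ℝ)/2^m) ω)^4)) ^ (4⁻¹:ℝ)
    with hGdef
  have hGmeas : ∀ J, Measurable (G J) := by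
    intro J
    apply Measurable.ennreal_tsum
    intro m
    apply (ENNReal.continuous_rpow_const.measurable).comp
    exact Finset.measurable_sum _ (fun k _ =>
      ((((hW J).meas _).sub ((hW J).meas _)).pow_const 4).ennreal_ofReal)
  set cc : ι → ℝ := fun J => (Jstar:ℝ) * (νJ J ^ β₃ * (Jstar:ℝ)) with hccdef
  have hcc0 : ∀ J, 0 ≤ cc J := by
    intro J
    have := Real.rpow_nonneg (le_trans zero_le_one (hνJ1 J)) β₃
    positivity
  set R : Ω → ℝ≥0∞ := fun ω => ∑' J, ENNReal.ofReal (cc J) * G J ω with hRdef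
  have hRmeas : Measurable R :=
    Measurable.ennreal_tsum fun J => (hGmeas J).const_mul _
  -- KR constant
  set KR : ℝ := (1 - (2:ℝ) ^ (-(4⁻¹:ℝ)))⁻¹ with hKRdef
  have hKR0 : 0 ≤ KR := by
    have hq1 : (2:ℝ) ^ (-(4⁻¹:ℝ)) < 1 :=
      Real.rpow_lt_one_of_one_lt_of_neg (by norm_num) (by norm_num)
    rw [hKRdef]
    exact le_of_lt (inv_pos.2 (by linarith))
  -- summability of the constants
  have hbase : Summable (fun J => νJ J ^ β₃ * (A J T) ^ (2⁻¹:ℝ)) := by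
    have key : ∀ J, νJ J ^ β₃ * (A J T) ^ (2⁻¹:ℝ) ≤
        (νJ J ^ (-β₂ - 2*ε) + νJ J ^ (β₂ + 2*β₃ + 4*ε) * A J T)/2 := by
      intro J
      have h1 : (0:ℝ) < νJ J := lt_of_lt_of_le one_pos (hνJ1 J)
      set x := νJ J ^ ((-β₂ - 2*ε)/2) with hx
      set y := νJ J ^ ((β₂ + 2*ε)/2 + β₃) * (A J T) ^ (2⁻¹:ℝ) with hy
      have hx0 : 0 ≤ x := Real.rpow_nonneg h1.le _
      have hy0 : 0 ≤ y := mul_nonneg (Real.rpow_nonneg h1.le _)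
        (Real.rpow_nonneg (hApos J T) _)
      have hxy : νJ J ^ β₃ * (A J T) ^ (2⁻¹:ℝ) = x * y := by
        rw [hx, hy, ← mul_assoc, ← Real.rpow_add h1]
        ring_nf
      have hx2 : x^2 = νJ J ^ (-β₂ - 2*ε) := by
        rw [hx, ← Real.rpow_natCast (νJ J ^ ((-β₂ - 2*ε)/2)) 2, ← Real.rpow_mul h1.le]
        norm_num
      have hy2 : y^2 ≤ νJ J ^ (β₂ + 2*β₃ + 4*ε) * A J T := by
        rw [hy, mul_pow]
        have hA2 : ((A J T) ^ (2⁻¹:ℝ))^2 = A J T := by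
          rw [← Real.rpow_natCast _ 2, ← Real.rpow_mul (hApos J T)]
          norm_num
        rw [hA2]
        apply mul_le_mul_of_nonneg_right _ (hApos J T)
        rw [← Real.rpow_natCast _ 2, ← Real.rpow_mul h1.le]
        apply Real.rpow_le_rpow_of_exponent_le (hνJ1 J)
        push_cast
        linarith
      have hAM : x * y ≤ (x^2 + y^2)/2 := by nlinarith [sq_nonneg (x - y)]
      rw [hxy]
      calc x * y ≤ (x^2 + y^2)/2 := hAM
        _ ≤ (νJ J ^ (-β₂ - 2*ε) + νJ J ^ (β₂ + 2*β₃ + 4*ε) * A J T)/2 := by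
            rw [hx2]
            gcongr
    apply Summable.of_nonneg_of_le (fun J => mul_nonneg
      (Real.rpow_nonneg (le_trans zero_le_one (hνJ1 J)) _)
      (Real.rpow_nonneg (hApos J T) _)) key
    exact (hsum1.add hsum2).div_const 2
  have hSum : Summable (fun J => cc J * ((A J T) ^ (2⁻¹:ℝ) * KR)) := by
    have : ∀ J, cc J * ((A J T) ^ (2⁻¹:ℝ) * KR)
        = ((Jstar:ℝ) * (Jstar:ℝ) * KR) * (νJ J ^ β₃ * (A J T) ^ (2⁻¹:ℝ)) := by
      intro J; rw [hccdef]; ring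
    exact (hbase.mul_left _).congr fun J => (this J).symm
  -- integral of R is finite
  have hRint : ∫⁻ ω, R ω ∂P < ⊤ := by
    rw [hRdef]
    simp only []
    rw [lintegral_tsum (fun J => ((hGmeas J).const_mul _).aemeasurable)]
    have hGint : ∀ J, ∫⁻ ω, ENNReal.ofReal (cc J) * G J ω ∂P
        ≤ ENNReal.ofReal (cc J) * (m4 ^ (4⁻¹:ℝ)
            * ENNReal.ofReal ((A J T) ^ (2⁻¹:ℝ) * KR)) := by
      intro J
      rw [lintegral_const_mul _ (hGmeas J)]
      exact mul_le_mul_right (G_bound P (W J) (hW J).meas (hW J).gauss_incr (hApos J T)) _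
    calc ∑' J, ∫⁻ ω, ENNReal.ofReal (cc J) * G J ω ∂P
        ≤ ∑' J, ENNReal.ofReal (cc J) * (m4 ^ (4⁻¹:ℝ)
            * ENNReal.ofReal ((A J T) ^ (2⁻¹:ℝ) * KR)) := ENNReal.tsum_le_tsum hGint
      _ = m4 ^ (4⁻¹:ℝ) * ∑' J, ENNReal.ofReal (cc J * ((A J T) ^ (2⁻¹:ℝ) * KR)) := by
          rw [← ENNReal.tsum_mul_left]
          congr 1; funext J
          rw [ENNReal.ofReal_mul (hcc0 J)]
          ring
      _ = m4 ^ (4⁻¹:ℝ) * ENNReal.ofReal (∑' J, cc J * ((A J T) ^ (2⁻¹:ℝ) * KR)) := by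
          rw [ENNReal.ofReal_tsum_of_nonneg (fun J => mul_nonneg (hcc0 J)
            (mul_nonneg (Real.rpow_nonneg (hApos J T) _) hKR0)) hSum]
      _ < ⊤ := ENNReal.mul_lt_top
          (ENNReal.rpow_lt_top_of_nonneg (by norm_num) m4_ne_top)
          ENNReal.ofReal_lt_top
  -- key bound on the weight sums
  have hkey : ∀ J : ι, (∑' j : ℕ, ENNReal.ofReal (μ j) * ENNReal.ofReal |(Jv J j : ℝ)|)
      ≤ ENNReal.ofReal (cc J) := by
    intro J
    have hfin := (hJsupp J).1
    have hcard := (hJsupp J).2 hfin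
    have hmerge : ∀ j : ℕ, ENNReal.ofReal (μ j) * ENNReal.ofReal |(Jv J j : ℝ)|
        = ENNReal.ofReal (μ j * |(Jv J j : ℝ)|) := fun j =>
      (ENNReal.ofReal_mul (hμpos j)).symm
    simp_rw [hmerge]
    have hzero : ∀ j ∉ hfin.toFinset, ENNReal.ofReal (μ j * |(Jv J j : ℝ)|) = 0 := by
      intro j hj
      rw [Set.Finite.mem_toFinset, Function.mem_support, not_not] at hj
      simp [hj]
    rw [tsum_eq_sum hzero]
    have hterm : ∀ j ∈ hfin.toFinset, ENNReal.ofReal (μ j * |(Jv J j : ℝ)|)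
        ≤ ENNReal.ofReal (νJ J ^ β₃ * (Jstar:ℝ)) := by
      intro j hj
      rw [Set.Finite.mem_toFinset, Function.mem_support] at hj
      apply ENNReal.ofReal_le_ofReal
      have h1 : μ j ≤ νJ J ^ β₃ := (hμν j).trans
        (Real.rpow_le_rpow (le_trans zero_le_one (hν j)) (hνJ J j hj) hβ₃)
      have h2 : |(Jv J j : ℝ)| ≤ (Jstar:ℝ) := by
        have := hJbnd J j
        have h3 : ((|Jv J j| : ℤ) : ℝ) ≤ ((Jstar:ℤ):ℝ) := Int.cast_le.2 this
        push_cast at h3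
        exact h3
      exact mul_le_mul h1 h2 (abs_nonneg _)
        (Real.rpow_nonneg (le_trans zero_le_one (hνJ1 J)) _)
    calc ∑ j ∈ hfin.toFinset, ENNReal.ofReal (μ j * |(Jv J j : ℝ)|)
        ≤ ∑ _j ∈ hfin.toFinset, ENNReal.ofReal (νJ J ^ β₃ * (Jstar:ℝ)) :=
          Finset.sum_le_sum hterm
      _ = (hfin.toFinset.card : ℝ≥0∞) * ENNReal.ofReal (νJ J ^ β₃ * (Jstar:ℝ)) := by
          rw [Finset.sum_const, nsmul_eq_mul]
      _ ≤ (Jstar : ℝ≥0∞) * ENNReal.ofReal (νJ J ^ β₃ * (Jstar:ℝ)) :=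
          mul_le_mul_left (by exact_mod_cast Nat.cast_le.2 hcard) _
      _ = ENNReal.ofReal (cc J) := by
          rw [← ENNReal.ofReal_natCast Jstar, ← ENNReal.ofReal_mul (Nat.cast_nonneg _)]
  -- a.e. events
  have hE : ∀ᵐ ω ∂P, ∀ J : ι, W J 0 ω = 0 ∧ Continuous (fun s => W J s ω) :=
    MeasureTheory.ae_all_iff.2 fun J => ((hW J).zero.and (hW J).cont)
  have hRfin : ∀ᵐ ω ∂P, R ω < ⊤ := ae_lt_top hRmeas hRint.ne
  filter_upwards [hE, hRfin] with ω hωE hωR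
  refine lt_of_le_of_lt ?_ hωR
  refine iSup₂_le fun t ht => ?_
  have hchain : ∀ J : ι, ENNReal.ofReal |W J (A J t) ω| ≤ G J ω := by
    intro J
    have hmem : A J t ∈ Set.Icc (0:ℝ) (A J T) :=
      ⟨hApos J t, hAmono J ⟨ht.1, ht.2⟩ ⟨hT.le, le_refl T⟩ ht.2⟩
    exact chain_bound (fun s => W J s ω) (hωE J).2 (hωE J).1 (hApos J T) hmem
  calc ∑' j : ℕ, ENNReal.ofReal (μ j) *
        ∑' J : ι, ENNReal.ofReal (|(Jv J j : ℝ)| * |W J (A J t) ω|)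
      ≤ ∑' j : ℕ, ENNReal.ofReal (μ j) *
        ∑' J : ι, ENNReal.ofReal |(Jv J j : ℝ)| * G J ω := by
        apply ENNReal.tsum_le_tsum; intro j
        apply mul_le_mul_right
        apply ENNReal.tsum_le_tsum; intro J
        rw [ENNReal.ofReal_mul (abs_nonneg _)]
        exact mul_le_mul_right (hchain J) _
    _ = ∑' J : ι, (∑' j : ℕ, ENNReal.ofReal (μ j) * ENNReal.ofReal |(Jv J j : ℝ)|)
          * G J ω := by
        simp_rw [← ENNReal.tsum_mul_left]
        rw [ENNReal.tsum_comm]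
        congr 1; funext J
        rw [← ENNReal.tsum_mul_right]
        congr 1; funext j
        ring
    _ ≤ ∑' J : ι, ENNReal.ofReal (cc J) * G J ω :=
        ENNReal.tsum_le_tsum fun J => mul_le_mul_left (hkey J) _
    _ = R ω := rfl
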